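/- Two finite abelian groups are isomorphic if and only if they have the same order structure; precisely, if G and H are finite abelian groups such that for every natural number n the number of elements of order n in G equals the number of elements of order n in H, then G and H are isomorphic. -/

import Mathlib

/-- Number of solutions of `n • x = 0` in `ZMod q`. -/
lemma zmod_card_nsmul_eq_zero (q n : ℕ) (hq : q ≠ 0) :
    Nat.card {x : ZMod q // n • x = 0} = Nat.gcd n q := by
  classical
  haveI : NeZero q := ⟨hq⟩
  set f : ZMod q →+ ZMod q := AddMonoidHom.mulLeft (n : ZMod q) with hf
  have hker : ∀ x : ZMod q, n • x = 0 ↔ x ∈ f.ker := by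
    intro x
    simp [hf, AddMonoidHom.mem_ker, AddMonoidHom.mulLeft, nsmul_eq_mul]
  have hcardker : Nat.card {x : ZMod q // n • x = 0} = Nat.card f.ker :=
    Nat.card_congr (Equiv.subtypeEquivRight (fun x => hker x))
  have hrange : (f.range : AddSubgroup (ZMod q)) = AddSubgroup.zmultiples (n : ZMod q) := by
    ext y
    constructor
    · rintro ⟨x, rfl⟩
      refine ⟨(x.val : ℤ), ?_⟩
      simp [hf, AddMonoidHom.mulLeft]
      exact mul_comm x _
    · rintro ⟨k, rfl⟩
      exact ⟨(k : ZMod q), by simp [hf, AddMonoidHom.mulLeft, mul_comm]⟩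
  have hcr : Nat.card f.range = q / Nat.gcd q n := by
    rw [hrange, Nat.card_zmultiples, ZMod.addOrderOf_coe n hq]
  have h1 : Nat.card (ZMod q) = Nat.card (ZMod q ⧸ f.ker) * Nat.card f.ker :=
    AddSubgroup.card_eq_card_quotient_mul_card_addSubgroup f.ker
  have h2 : Nat.card (ZMod q ⧸ f.ker) = Nat.card f.range :=
    Nat.card_congr (QuotientAddGroup.quotientKerEquivRange f).toEquiv
  have hq' : Nat.card (ZMod q) = q := Nat.card_zmod q
  have hgd : Nat.gcd q n ∣ q := Nat.gcd_dvd_left q n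
  have hgpos : 0 < Nat.gcd q n := Nat.gcd_pos_of_pos_left n (Nat.pos_of_ne_zero hq)
  have hdvd : q / Nat.gcd q n ∣ q := Nat.div_dvd_of_dvd hgd
  have hdpos : 0 < q / Nat.gcd q n := Nat.div_pos (Nat.le_of_dvd (Nat.pos_of_ne_zero hq) hgd) hgpos
  rw [hq', h2, hcr] at h1
  rw [hcardker, Nat.gcd_comm]
  have hc : (q / Nat.gcd q n) * Nat.gcd q n = q := Nat.div_mul_cancel hgd
  exact Nat.eq_of_mul_eq_mul_left hdpos (by omega)

open Multiset

/-- Drop subsingleton components from a product of additive groups. -/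
def addPiSubtype {ι : Type*} (p : ι → Prop) [DecidablePred p] (A : ι → Type*)
    [∀ i, AddGroup (A i)] (h : ∀ i, ¬ p i → Subsingleton (A i)) :
    (∀ i, A i) ≃+ (∀ i : Subtype p, A i.1) where
  toFun x i := x i.1
  invFun y i := if hp : p i then y ⟨i, hp⟩ else 0
  left_inv x := by
    funext i
    by_cases hp : p i
    · simp [hp]
    · haveI := h i hp
      exact Subsingleton.elim _ _
  right_inv y := by
    funext i
    simp [i.2]
  map_add' x y := rfl

/-- Reindex a product of additive groups along an equivalence. -/
def addPiComp {ι κ : Type*} (σ : ι ≃ κ) (D : κ → Type*) [∀ j, Add (D j)] :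
    (∀ j, D j) ≃+ (∀ i, D (σ i)) :=
  { Equiv.piCongrLeft' D σ.symm with map_add' := fun _ _ => rfl }

lemma addPiComp_apply {ι κ : Type*} (σ : ι ≃ κ) (D : κ → Type*) [∀ j, Add (D j)]
    (x : ∀ j, D j) (i : ι) : addPiComp σ D x i = x (σ i) := rfl

/-- Counting solutions of `x ^ n = 1` in a finite comm group presented as a product
of cyclic groups. -/
lemma card_pow_eq_one_of_equiv {G : Type*} [CommGroup G] [Finite G] {ι : Type*} [Fintype ι]
    (q : ι → ℕ) (hq : ∀ i, q i ≠ 0) (eG : Additive G ≃+ ∀ i, ZMod (q i)) (n : ℕ) :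
    Nat.card {x : G // x ^ n = 1} = ∏ i, Nat.gcd n (q i) := by
  classical
  have e1 : {x : G // x ^ n = 1} ≃ {a : Additive G // n • a = 0} :=
    Additive.ofMul.subtypeEquiv fun x => by
      rw [← ofMul_pow]
      exact ⟨fun hx => by rw [hx]; rfl, fun hx => Additive.toMul.injective hx⟩
  have e2 : {a : Additive G // n • a = 0} ≃ {y : ∀ i, ZMod (q i) // n • y = 0} :=
    eG.toEquiv.subtypeEquiv fun a => by
      have hm : eG (n • a) = n • eG a := map_nsmul eG n a
      rw [show (eG.toEquiv a) = eG a from rfl, ← hm, AddEquivClass.map_eq_zero_iff]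
  have e3 : {y : ∀ i, ZMod (q i) // n • y = 0} ≃ ∀ i, {z : ZMod (q i) // n • z = 0} :=
    (Equiv.subtypeEquivRight fun y => by
        simp [funext_iff]).trans
      (Equiv.subtypePiEquivPi)
  rw [Nat.card_congr (e1.trans (e2.trans e3)), Nat.card_pi]
  exact Finset.prod_congr rfl fun i _ => zmod_card_nsmul_eq_zero (q i) n (hq i)

open Multiset

lemma sum_map_min_succ (M : Multiset ℕ) (v : ℕ → ℕ) (k : ℕ) :
    (M.map fun q => min (k+1) (v q)).sum
      = (M.map fun q => min k (v q)).sum + card (M.filter fun q => k+1 ≤ v q) := by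
  classical
  induction M using Multiset.induction with
  | empty => simp
  | cons a s ih =>
    simp only [map_cons, sum_cons, ih]
    by_cases h : k + 1 ≤ v a
    · rw [filter_cons_of_pos _ (by simpa using h), card_cons,
        min_eq_left h, min_eq_left (by omega)]
      ring
    · rw [filter_cons_of_neg _ (by simpa using h),
        min_eq_right (by omega), min_eq_right (by omega)]
      ring

lemma factorization_multiset_prod (M : Multiset ℕ) (h : ∀ q ∈ M, q ≠ 0) (p : ℕ) :
    (M.prod).factorization p = (M.map fun q => q.factorization p).sum := by
  induction M using Multiset.induction with
  | empty => simp
  | cons a s ih =>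
    have ha : a ≠ 0 := h a (mem_cons_self a s)
    have hs : s.prod ≠ 0 := by
      rw [Ne, prod_eq_zero_iff]
      exact fun h0 => h 0 (mem_cons_of_mem h0) rfl
    rw [prod_cons, map_cons, sum_cons, Nat.factorization_mul ha hs, Finsupp.add_apply,
      ih (fun q hq => h q (mem_cons_of_mem hq))]

lemma factorization_gcd_pow {p k q : ℕ} (hp : p.Prime) (hq : q ≠ 0) :
    (Nat.gcd (p ^ k) q).factorization p = min k (q.factorization p) := by
  rw [Nat.factorization_gcd (pow_ne_zero k hp.pos.ne') hq, Finsupp.inf_apply,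
    hp.factorization_pow, Finsupp.single_eq_same]

lemma eq_pow_iff_factorization {a p e : ℕ} (ha : IsPrimePow a) (hp : p.Prime) (he : 1 ≤ e) :
    a = p ^ e ↔ a.factorization p = e := by
  obtain ⟨r, f, hr, hf, rfl⟩ := ha
  rw [← Nat.prime_iff] at hr
  constructor
  · rintro hE
    rw [hE, hp.factorization_pow, Finsupp.single_eq_same]
  · intro hE
    rw [hr.factorization_pow, Finsupp.single_apply] at hE
    by_cases hrp : r = p
    · subst hrp
      rw [if_pos rfl] at hE
      rw [hE]
    · rw [if_neg hrp] at hE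
      omega

lemma multiset_eq_of_gcd_prod (M N : Multiset ℕ)
    (hM : ∀ q ∈ M, IsPrimePow q) (hN : ∀ q ∈ N, IsPrimePow q)
    (h : ∀ n : ℕ, 0 < n → (M.map (Nat.gcd n)).prod = (N.map (Nat.gcd n)).prod) : M = N := by
  classical
  have hM0 : ∀ q ∈ M, q ≠ 0 := fun q hq => (hM q hq).pos.ne'
  have hN0 : ∀ q ∈ N, q ≠ 0 := fun q hq => (hN q hq).pos.ne'
  have hS : ∀ p : ℕ, p.Prime → ∀ k,
      (M.map fun q => min k (q.factorization p)).sum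
        = (N.map fun q => min k (q.factorization p)).sum := by
    intro p hp k
    have h1 := congrArg (fun m => m.factorization p) (h (p ^ k) (pow_pos hp.pos k))
    rw [factorization_multiset_prod _ (fun q hq => by
          obtain ⟨a, ha, rfl⟩ := mem_map.1 hq
          exact (Nat.gcd_pos_of_pos_right _ (Nat.pos_of_ne_zero (hM0 a ha))).ne'),
        factorization_multiset_prod _ (fun q hq => by
          obtain ⟨a, ha, rfl⟩ := mem_map.1 hq
          exact (Nat.gcd_pos_of_pos_right _ (Nat.pos_of_ne_zero (hN0 a ha))).ne'),
        map_map, map_map] at h1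
    calc (M.map fun q => min k (q.factorization p)).sum
        = (M.map fun q => (Nat.gcd (p ^ k) q).factorization p).sum := by
          refine congrArg _ (map_congr rfl fun q hq => ?_)
          rw [factorization_gcd_pow hp (hM0 q hq)]
      _ = (N.map fun q => (Nat.gcd (p ^ k) q).factorization p).sum := h1
      _ = (N.map fun q => min k (q.factorization p)).sum := by
          refine congrArg _ (map_congr rfl fun q hq => ?_)
          rw [factorization_gcd_pow hp (hN0 q hq)]
  have hA : ∀ p : ℕ, p.Prime → ∀ k,
      card (M.filter fun q => k+1 ≤ q.factorization p)
        = card (N.filter fun q => k+1 ≤ q.factorization p) := by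
    intro p hp k
    have e1 := sum_map_min_succ M (fun q => q.factorization p) k
    have e2 := sum_map_min_succ N (fun q => q.factorization p) k
    have e3 := hS p hp k
    have e4 := hS p hp (k+1)
    omega
  have hsplit : ∀ (T : Multiset ℕ), (∀ q ∈ T, IsPrimePow q) → ∀ p : ℕ, p.Prime → ∀ e : ℕ, 1 ≤ e →
      card (T.filter fun q => e ≤ q.factorization p)
        = count (p ^ e) T + card (T.filter fun q => e+1 ≤ q.factorization p) := by
    intro T hT p hp e he
    induction T using Multiset.induction with
    | empty => simp
    | cons a s ih =>
      have ha := hT a (mem_cons_self a s)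
      have ihs := ih (fun q hq => hT q (mem_cons_of_mem hq))
      have hiff := eq_pow_iff_factorization ha hp he
      by_cases h1 : e ≤ a.factorization p
      · rw [filter_cons_of_pos _ (by simpa using h1), card_cons, count_cons, ihs]
        by_cases h2 : a.factorization p = e
        · have : a = p ^ e := hiff.2 h2
          rw [filter_cons_of_neg _ (by simpa using (by omega : ¬ (e+1 ≤ a.factorization p))), if_pos this.symm]
          ring
        · have : ¬ (a = p ^ e) := fun hc => h2 (hiff.1 hc)
          rw [filter_cons_of_pos _ (by simpa using (by omega : e+1 ≤ a.factorization p)), card_cons, if_neg (fun hc => this hc.symm)]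
          ring
      · have h2 : ¬ (a.factorization p = e) := by omega
        rw [filter_cons_of_neg _ (by simpa using h1), count_cons,
          filter_cons_of_neg _ (by simpa using (by omega : ¬ (e+1 ≤ a.factorization p))), ihs,
          if_neg (fun hc => h2 (hiff.1 hc.symm))]
        ring
  ext a
  by_cases ha : IsPrimePow a
  · obtain ⟨p, e, hp, he, rfl⟩ := ha
    rw [← Nat.prime_iff] at hp
    have d1 := hsplit M hM p hp e he
    have d2 := hsplit N hN p hp e he
    have a1 := hA p hp (e-1)
    have a2 := hA p hp e
    rw [show (e-1)+1 = e by omega] at a1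
    omega
  · rw [count_eq_zero_of_notMem (fun hc => ha (hM _ hc)),
      count_eq_zero_of_notMem (fun hc => ha (hN _ hc))]

lemma filtered_gcd_prod (s : Multiset ℕ) (n : ℕ) :
    (((s.filter (fun a => a ≠ 1)).map (Nat.gcd n)).prod) = ((s.map (Nat.gcd n)).prod) := by
  classical
  conv_rhs => rw [← Multiset.filter_add_not (fun a => a ≠ 1) s]
  rw [Multiset.map_add, Multiset.prod_add]
  have : ((s.filter (fun a => ¬ a ≠ 1)).map (Nat.gcd n)).prod = 1 := by
    apply Multiset.prod_eq_one
    intro b hb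
    obtain ⟨a, ha, rfl⟩ := Multiset.mem_map.1 hb
    have : a = 1 := by simpa using (Multiset.mem_filter.1 ha).2
    simp [this]
  rw [this, mul_one]




/-- Two finite abelian groups with the same order structure (i.e., the
same number of elements of each order) are isomorphic. -/
theorem stmt_13 {G H : Type*} [CommGroup G] [CommGroup H] [Finite G] [Finite H]
    (h : ∀ n : ℕ, Nat.card {x : G // orderOf x = n} = Nat.card {x : H // orderOf x = n}) :
    Nonempty (G ≃* H) := by
  classical
  cases nonempty_fintype G
  cases nonempty_fintype H
  -- Step A : equal number of solutions of x ^ n = 1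
  have hpow : ∀ n : ℕ, n ≠ 0 →
      Nat.card {x : G // x ^ n = 1} = Nat.card {x : H // x ^ n = 1} := by
    intro n hn
    have key : ∀ m : ℕ, (Finset.univ.filter fun x : G => orderOf x = m).card
        = (Finset.univ.filter fun x : H => orderOf x = m).card := by
      intro m
      rw [← Fintype.card_subtype, ← Fintype.card_subtype,
        ← Nat.card_eq_fintype_card, ← Nat.card_eq_fintype_card]
      exact h m
    have hG := sum_card_orderOf_eq_card_pow_eq_one (G := G) (n := n) hn
    have hH := sum_card_orderOf_eq_card_pow_eq_one (G := H) (n := n) hn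
    rw [Nat.card_eq_fintype_card, Nat.card_eq_fintype_card,
      Fintype.card_subtype, Fintype.card_subtype]
    rw [← hG, ← hH]
    exact Finset.sum_congr rfl fun m _ => key m
  -- Step B : structure theorem decompositions
  obtain ⟨ι, fι, p, hp, e, ⟨f⟩⟩ := AddCommGroup.equiv_directSum_zmod_of_finite (Additive G)
  obtain ⟨κ, fκ, p', hp', e', ⟨g⟩⟩ := AddCommGroup.equiv_directSum_zmod_of_finite (Additive H)
  set q : ι → ℕ := fun i => p i ^ e i with hqdef
  set r : κ → ℕ := fun j => p' j ^ e' j with hrdef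
  have hq0 : ∀ i, q i ≠ 0 := fun i => pow_ne_zero _ (hp i).pos.ne'
  have hr0 : ∀ j, r j ≠ 0 := fun j => pow_ne_zero _ (hp' j).pos.ne'
  have eG : Additive G ≃+ ∀ i, ZMod (q i) := f.trans (DirectSum.addEquivProd _)
  have eH : Additive H ≃+ ∀ j, ZMod (r j) := g.trans (DirectSum.addEquivProd _)
  -- Step C : equal gcd products
  have hgcd : ∀ n : ℕ, 0 < n → (∏ i, Nat.gcd n (q i)) = ∏ j, Nat.gcd n (r j) := by
    intro n hn
    rw [← card_pow_eq_one_of_equiv q hq0 eG n, ← card_pow_eq_one_of_equiv r hr0 eH n]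
    exact hpow n hn.ne'
  -- Step D : multiset equality
  set M : Multiset ℕ := (Finset.univ.val.map q).filter (fun a => a ≠ 1) with hMdef
  set N : Multiset ℕ := (Finset.univ.val.map r).filter (fun a => a ≠ 1) with hNdef
  have hMpp : ∀ a ∈ M, IsPrimePow a := by
    intro a ha
    obtain ⟨hmem, hne⟩ := Multiset.mem_filter.1 ha
    obtain ⟨i, _, rfl⟩ := Multiset.mem_map.1 hmem
    refine ⟨p i, e i, Nat.prime_iff.1 (hp i), ?_, rfl⟩
    rcases Nat.eq_zero_or_pos (e i) with h0 | h0
    · exact absurd (by simp [hqdef, h0]) hne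
    · exact h0
  have hNpp : ∀ a ∈ N, IsPrimePow a := by
    intro a ha
    obtain ⟨hmem, hne⟩ := Multiset.mem_filter.1 ha
    obtain ⟨j, _, rfl⟩ := Multiset.mem_map.1 hmem
    refine ⟨p' j, e' j, Nat.prime_iff.1 (hp' j), ?_, rfl⟩
    rcases Nat.eq_zero_or_pos (e' j) with h0 | h0
    · exact absurd (by simp [hrdef, h0]) hne
    · exact h0
  have hMN : M = N := by
    apply multiset_eq_of_gcd_prod M N hMpp hNpp
    intro n hn
    rw [hMdef, hNdef, filtered_gcd_prod, filtered_gcd_prod,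
      Multiset.map_map, Multiset.map_map]
    have hL : ((Finset.univ.val.map (Nat.gcd n ∘ q)).prod) = ∏ i, Nat.gcd n (q i) := by
      rw [Finset.prod_eq_multiset_prod]; rfl
    have hR : ((Finset.univ.val.map (Nat.gcd n ∘ r)).prod) = ∏ j, Nat.gcd n (r j) := by
      rw [Finset.prod_eq_multiset_prod]; rfl
    rw [hL, hR]
    exact hgcd n hn
  -- Step E : build the bijection between nontrivial indices
  have hcount : ∀ c : ℕ, Fintype.card {i : {i : ι // q i ≠ 1} // q i.1 = c}
      = Fintype.card {j : {j : κ // r j ≠ 1} // r j.1 = c} := by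
    intro c
    have eI : {i : {i : ι // q i ≠ 1} // q i.1 = c} ≃ {i : ι // q i ≠ 1 ∧ q i = c} :=
      Equiv.subtypeSubtypeEquivSubtypeInter (fun i => q i ≠ 1) (fun i => q i = c)
    have eK : {j : {j : κ // r j ≠ 1} // r j.1 = c} ≃ {j : κ // r j ≠ 1 ∧ r j = c} :=
      Equiv.subtypeSubtypeEquivSubtypeInter (fun j => r j ≠ 1) (fun j => r j = c)
    rw [Fintype.card_congr eI, Fintype.card_congr eK]
    by_cases hc : c = 1
    · subst hc
      rw [Fintype.card_eq_zero_iff.2, Fintype.card_eq_zero_iff.2]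
      · exact ⟨fun x => x.2.1 x.2.2⟩
      · exact ⟨fun x => x.2.1 x.2.2⟩
    · have hMc : Fintype.card {i : ι // q i ≠ 1 ∧ q i = c} = Multiset.count c M := by
        rw [Fintype.card_subtype, hMdef, Multiset.count_filter, if_pos hc,
          Multiset.count_map, Finset.card_def, Finset.filter_val]
        congr 1
        apply Multiset.filter_congr
        intro a _
        constructor
        · rintro ⟨_, h2⟩
          exact h2.symm
        · intro hh
          exact ⟨by rw [← hh]; exact hc, hh.symm⟩
      have hNc : Fintype.card {j : κ // r j ≠ 1 ∧ r j = c} = Multiset.count c N := by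
        rw [Fintype.card_subtype, hNdef, Multiset.count_filter, if_pos hc,
          Multiset.count_map, Finset.card_def, Finset.filter_val]
        congr 1
        apply Multiset.filter_congr
        intro a _
        constructor
        · rintro ⟨_, h2⟩
          exact h2.symm
        · intro hh
          exact ⟨by rw [← hh]; exact hc, hh.symm⟩
      rw [hMc, hNc, hMN]
  obtain ⟨σ, hσ⟩ : ∃ σ : {i : ι // q i ≠ 1} ≃ {j : κ // r j ≠ 1},
      ∀ i : {i : ι // q i ≠ 1}, r (σ i).1 = q i.1 :=
    ⟨Equiv.ofFiberEquiv (f := fun i : {i : ι // q i ≠ 1} => q i.1)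
        (g := fun j : {j : κ // r j ≠ 1} => r j.1)
        (fun c => Fintype.equivOfCardEq (hcount c)),
      fun i => Equiv.ofFiberEquiv_map (f := fun i : {i : ι // q i ≠ 1} => q i.1)
        (g := fun j : {j : κ // r j ≠ 1} => r j.1)
        (fun c => Fintype.equivOfCardEq (hcount c)) i⟩
  -- Step F : assemble the isomorphism
  have subG : ∀ i : ι, ¬ (q i ≠ 1) → Subsingleton (ZMod (q i)) := by
    intro i hi
    have : q i = 1 := not_not.1 hi
    rw [this]
    infer_instance
  have subH : ∀ j : κ, ¬ (r j ≠ 1) → Subsingleton (ZMod (r j)) := by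
    intro j hj
    have : r j = 1 := not_not.1 hj
    rw [this]
    infer_instance
  have eG' : Additive G ≃+ ∀ i : {i : ι // q i ≠ 1}, ZMod (q i.1) :=
    eG.trans (addPiSubtype _ _ subG)
  have eH' : Additive H ≃+ ∀ i : {i : ι // q i ≠ 1}, ZMod (q i.1) :=
    (eH.trans (addPiSubtype _ _ subH)).trans
      ((addPiComp σ (fun j : {j : κ // r j ≠ 1} => ZMod (r j.1))).trans
        (AddEquiv.piCongrRight fun i => (ZMod.ringEquivCongr (hσ i)).toAddEquiv))
  exact ⟨MulEquiv.toAdditive.symm (eG'.trans eH'.symm)⟩
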